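/- Let 0 ≤ η < 1/2, G(z) = (1/4)z⁴ + 2ηz³ + 4η²z² − z², v₀ = √(−G(√(η²+2)−3η)). Then (z − (√(η²+2)−3η))² divides the polynomial G(z) + v₀². -/
import Mathlib


open Polynomial in
theorem double_root_divides (η : ℝ) (hη0 : 0 ≤ η) (hη : η < 1/2)
    (v₀ : ℝ)
    (hv₀ : v₀ = Real.sqrt (-((1/4) * (Real.sqrt (η^2 + 2) - 3*η)^4
      + 2*η*(Real.sqrt (η^2 + 2) - 3*η)^3 + 4*η^2*(Real.sqrt (η^2 + 2) - 3*η)^2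
      - (Real.sqrt (η^2 + 2) - 3*η)^2))) :
    (X - C (Real.sqrt (η^2 + 2) - 3*η))^2 ∣
      (C (1/4 : ℝ) * X^4 + C (2*η) * X^3 + C (4*η^2 - 1) * X^2 + C (v₀^2)) := by
  set s := Real.sqrt (η^2 + 2) with hs
  have hs0 : 0 ≤ s := Real.sqrt_nonneg _
  have hs2 : s^2 = η^2 + 2 := Real.sq_sqrt (by positivity)
  have hsle : s ≤ 3/2 := by nlinarith
  set r := s - 3*η with hr
  have hG : (1/4) * r^4 + 2*η*r^3 + 4*η^2*r^2 - r^2 ≤ 0 := by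
    have h1 : 0 ≤ r := by nlinarith
    have h2 : 1 - η^2 - η*s ≥ 0 := by nlinarith
    nlinarith [sq_nonneg r, mul_nonneg (mul_nonneg h1 h1) h2]
  have hv : v₀^2 = -((1/4) * r^4 + 2*η*r^3 + 4*η^2*r^2 - r^2) := by
    rw [hv₀, Real.sq_sqrt (by linarith)]
  refine ⟨C (1/4 : ℝ) * (X^2 + C (2*η + 2*s) * X + C (2 - 2*η^2 - 2*η*s)), ?_⟩
  apply Polynomial.funext
  intro x
  simp only [eval_add, eval_mul, eval_pow, eval_sub, eval_C, eval_X]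
  rw [hv, hr]
  linear_combination hs2 * (-(1/4)*s^2 + (3/2)*η*s - (1/2)*s*x - (9/4)*η^2
    + (3/4)*x^2 + (3/2)*η*x)
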